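/- Assuming thorough semantics, expressiveness containment implies relative completeness containment: if abstraction formalisms F₁ and F₂ (over the same class of concrete structures, each equipped with thorough semantics) satisfy F₁ ⊑_ex F₂, then compl(F₁) ⊆ compl(F₂). -/
import Mathlib


set_option autoImplicit true

/-- An abstraction formalism over a fixed class of concrete model-states `Conc`,
a type of formulas `Form` and a concrete satisfaction relation `sat`:
a class of abstract model-states `Abs`, a refinement relation `ref` and an
abstract satisfaction relation `asat`. -/
structure Formalism (Conc : Type) (Form : Type) (sat : Conc → Form → Prop) where
  Abs : Type
  ref : Conc → Abs → Prop
  asat : Abs → Form → Prop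

/-- The concretisation set of an abstract model-state. -/
def concSet {Conc Form : Type} {sat : Conc → Form → Prop}
    (F : Formalism Conc Form sat) (a : F.Abs) : Set Conc := {c | F.ref c a}

/-- `F` uses thorough semantics. -/
def Thorough {Conc Form : Type} {sat : Conc → Form → Prop}
    (F : Formalism Conc Form sat) : Prop :=
  ∀ a φ, F.asat a φ ↔ ∀ c ∈ concSet F a, sat c φ

/-- `F₂` is at least as expressive as `F₁`. -/
def ExLe {Conc Form : Type} {sat : Conc → Form → Prop}
    (F₁ F₂ : Formalism Conc Form sat) : Prop :=
  ∀ a₁ : F₁.Abs, ∃ a₂ : F₂.Abs, concSet F₁ a₁ = concSet F₂ a₂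

/-- The completeness set of `F`: satisfiable formulas provable on every concrete
model-state satisfying them via some abstraction in `F`. -/
def complSet {Conc Form : Type} {sat : Conc → Form → Prop}
    (F : Formalism Conc Form sat) : Set Form :=
  {φ | (∃ c, sat c φ) ∧ ∀ c, sat c φ → ∃ a, F.ref c a ∧ F.asat a φ}

/-- Assuming thorough semantics, expressiveness containment implies relative
completeness containment. -/
theorem exLe_implies_complLe {Conc Form : Type} {sat : Conc → Form → Prop}
    (F₁ F₂ : Formalism Conc Form sat)
    (h₁ : Thorough F₁) (h₂ : Thorough F₂) (hex : ExLe F₁ F₂) :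
    complSet F₁ ⊆ complSet F₂ := by
  intro φ hφ
  obtain ⟨hsat, hall⟩ := hφ
  refine ⟨hsat, fun c hc => ?_⟩
  obtain ⟨a₁, hr, ha⟩ := hall c hc
  obtain ⟨a₂, heq⟩ := hex a₁
  refine ⟨a₂, ?_, ?_⟩
  · have : c ∈ concSet F₂ a₂ := heq ▸ hr
    exact this
  · rw [h₂]
    intro c' hc'
    exact (h₁ a₁ φ).mp ha c' (heq ▸ hc')
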